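/- Consider the action of SL₂(k) × SL₂(k) on k² ⊕ M₂(k) given by (g₁,g₂)·(v, A) = (g₁v, g₁ A g₂ᵀ). For every element (v, A) of k² ⊕ M₂(k), there exist (g₁,g₂) ∈ SL₂(k) × SL₂(k) such that, writing (w, B) = (g₁v, g₁ A g₂ᵀ), the first entry of w is 0 and the (1,1)-entry of B is 0. -/

import Mathlib

open Matrix

lemma sl2_row_kill {k : Type*} [Field k] (a b : k) :
    ∃ g : Matrix.SpecialLinearGroup (Fin 2) k,
      a * (g : Matrix (Fin 2) (Fin 2) k) 0 0 + b * (g : Matrix (Fin 2) (Fin 2) k) 0 1 = 0 := by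
  by_cases ha : a = 0
  · exact ⟨1, by simp [ha]⟩
  · refine ⟨⟨!![-b/a, 1; -1, 0], by simp [Matrix.det_fin_two_of]⟩, ?_⟩
    simp only [Matrix.SpecialLinearGroup.coe_mk]
    field_simp
    simp [ha, mul_div_cancel₀]

/-- For the action of `SL₂(k) × SL₂(k)` on `k² ⊕ M₂(k)` given by
`(g₁,g₂)·(v, A) = (g₁v, g₁ A g₂ᵀ)`, every element can be moved so that the first entry of
the vector and the `(1,1)`-entry of the matrix vanish. -/
theorem sl2_sl2_eliminate (k : Type*) [Field k] (v : Fin 2 → k)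
    (A : Matrix (Fin 2) (Fin 2) k) :
    ∃ (g₁ g₂ : Matrix.SpecialLinearGroup (Fin 2) k),
      ((g₁ : Matrix (Fin 2) (Fin 2) k) *ᵥ v) 0 = 0 ∧
      ((g₁ : Matrix (Fin 2) (Fin 2) k) * A * (g₂ : Matrix (Fin 2) (Fin 2) k)ᵀ) 0 0 = 0 := by
  obtain ⟨g₁, hg₁⟩ := sl2_row_kill (v 0) (v 1)
  set B := (g₁ : Matrix (Fin 2) (Fin 2) k) * A with hB
  obtain ⟨g₂, hg₂⟩ := sl2_row_kill (B 0 0) (B 0 1)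
  refine ⟨g₁, g₂, ?_, ?_⟩
  · simp only [Matrix.mulVec, dotProduct, Fin.sum_univ_two]
    linear_combination hg₁
  · rw [Matrix.mul_apply, Fin.sum_univ_two]
    simp only [Matrix.transpose_apply, ← hB]
    linear_combination hg₂
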